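/- Let T be a triangulated category and S a full additive subcategory of T such that Hom(S, S'[k]) = 0 for all S, S' ∈ S and k > 0, and such that S generates T as a triangulated category. Then S is the coheart of a unique bounded co-t-structure on T. -/

import Mathlib

open CategoryTheory CategoryTheory.Limits CategoryTheory.Pretriangulated ZeroObject

/-- A co-t-structure on a triangulated category `C`: a pair `(ge, le)` of classes of
objects (`ge` playing the role of `T_{≥0}` and `le` of `T_{≤0}`), closed under direct
summands, with `T_{≥0}[-1] ⊆ T_{≥0}`, `T_{≤0}[1] ⊆ T_{≤0}`,
`Hom(T_{≥0}[-1], T_{≤0}) = 0`, and such that every object `X` fits into a distinguished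
triangle `A → X → B → A[1]` with `A ∈ T_{≥0}[-1]` and `B ∈ T_{≤0}`. -/
structure CoTStructure (C : Type*) [Category C] [Preadditive C] [HasZeroObject C]
    [HasShift C ℤ] [∀ n : ℤ, (CategoryTheory.shiftFunctor C n).Additive]
    [Pretriangulated C] where
  ge : Set C
  le : Set C
  ge_summand : ∀ {X Y : C}, X ∈ ge → (∃ (i : Y ⟶ X) (r : X ⟶ Y), i ≫ r = 𝟙 Y) → Y ∈ ge
  le_summand : ∀ {X Y : C}, X ∈ le → (∃ (i : Y ⟶ X) (r : X ⟶ Y), i ≫ r = 𝟙 Y) → Y ∈ le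
  ge_shift : ∀ X ∈ ge, X⟦(-1 : ℤ)⟧ ∈ ge
  le_shift : ∀ X ∈ le, X⟦(1 : ℤ)⟧ ∈ le
  hom_zero : ∀ X : _, X⟦(1 : ℤ)⟧ ∈ ge → ∀ Y ∈ le, ∀ f : X ⟶ Y, f = 0
  exists_triangle : ∀ X : C, ∃ (A B : C) (f : A ⟶ X) (g : X ⟶ B) (h : B ⟶ A⟦(1 : ℤ)⟧),
    A⟦(1 : ℤ)⟧ ∈ ge ∧ B ∈ le ∧ Triangle.mk f g h ∈ distinguishedTriangles

variable {C : Type*} [Category C] [Preadditive C] [HasZeroObject C]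
    [HasShift C ℤ] [∀ n : ℤ, (CategoryTheory.shiftFunctor C n).Additive]
    [Pretriangulated C]

/-- A co-t-structure is bounded if every object lies in some `T_{≥n}` and some
`T_{≤m}` (where `X ∈ T_{≥n} ↔ X⟦n⟧ ∈ T_{≥0}` and `X ∈ T_{≤m} ↔ X⟦m⟧ ∈ T_{≤0}`). -/
def CoTStructure.bounded (t : CoTStructure C) : Prop :=
  ∀ X : C, (∃ n : ℤ, X⟦n⟧ ∈ t.ge) ∧ (∃ n : ℤ, X⟦n⟧ ∈ t.le)

/-- The coheart of a co-t-structure. -/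
def CoTStructure.coheart (t : CoTStructure C) : Set C := t.ge ∩ t.le

set_option linter.unusedSectionVars false

namespace Stmt6Aux

variable {C : Type*} [Category C] [Preadditive C] [HasZeroObject C]
    [HasShift C ℤ] [∀ n : ℤ, (CategoryTheory.shiftFunctor C n).Additive]
    [Pretriangulated C]

/-- retract -/
def Ret (X U : C) : Prop := ∃ (i : X ⟶ U) (r : U ⟶ X), i ≫ r = 𝟙 X

lemma Ret.refl (X : C) : Ret X X := ⟨𝟙 X, 𝟙 X, by simp⟩

lemma Ret.trans {X U V : C} (h : Ret X U) (h' : Ret U V) : Ret X V := by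
  obtain ⟨i, r, hir⟩ := h; obtain ⟨i', r', hir'⟩ := h'
  exact ⟨i ≫ i', r' ≫ r, by rw [Category.assoc, ← Category.assoc i', hir',
    Category.id_comp, hir]⟩

lemma Ret.of_iso {X U : C} (e : X ≅ U) : Ret X U := ⟨e.hom, e.inv, e.hom_inv_id⟩

lemma Ret.shift {X U : C} (h : Ret X U) (m : ℤ) : Ret (X⟦m⟧) (U⟦m⟧) := by
  obtain ⟨i, r, hir⟩ := h
  exact ⟨i⟦m⟧', r⟦m⟧', by simp [← Functor.map_comp, hir]⟩

/-- generated class -/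
inductive gcl (G : Set C) : C → Prop
  | of {X : C} (h : X ∈ G) : gcl G X
  | iso {X Y : C} (e : X ≅ Y) (h : gcl G X) : gcl G Y
  | ext (T : Triangle C) (hT : T ∈ distinguishedTriangles) (h₁ : gcl G T.obj₁)
      (h₃ : gcl G T.obj₃) : gcl G T.obj₂

lemma gcl_mono {G G' : Set C} (h : G ⊆ G') {X : C} (hX : gcl G X) : gcl G' X := by
  induction hX with
  | of h' => exact gcl.of (h h')
  | iso e _ ih => exact gcl.iso e ih
  | ext T hT _ _ ih₁ ih₃ => exact gcl.ext T hT ih₁ ih₃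

lemma gcl_shift {G G' : Set C} (m : ℤ) (h : ∀ X ∈ G, (X⟦m⟧) ∈ G')
    {X : C} (hX : gcl G X) : gcl G' (X⟦m⟧) := by
  induction hX with
  | of h' => exact gcl.of (h _ h')
  | iso e _ ih => exact gcl.iso ((shiftFunctor C m).mapIso e) ih
  | ext T hT _ _ ih₁ ih₃ =>
      exact gcl.ext (Triangle.mk ((m.negOnePow • T.mor₁⟦m⟧' : _)) (m.negOnePow • T.mor₂⟦m⟧')
        (m.negOnePow • T.mor₃⟦m⟧' ≫ (shiftFunctorComm C 1 m).hom.app T.obj₁))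
        (Triangle.shift_distinguished T hT m) ih₁ ih₃

/-- fixed-target vanishing -/
lemma gcl_vanish_tgt {G : Set C} (T₀ : C) (h : ∀ X ∈ G, ∀ f : X ⟶ T₀, f = 0)
    {X : C} (hX : gcl G X) : ∀ f : X ⟶ T₀, f = 0 := by
  induction hX with
  | of h' => exact h _ h'
  | iso e _ ih =>
      intro f
      have : e.hom ≫ f = 0 := ih _
      rw [← Category.id_comp f, ← e.inv_hom_id, Category.assoc, this, Limits.comp_zero]
  | ext T hT _ _ ih₁ ih₃ =>
      intro f
      obtain ⟨g, hg⟩ := Triangle.yoneda_exact₂ T hT f (ih₁ _)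
      rw [hg, ih₃ g, Limits.comp_zero]

/-- fixed-source vanishing -/
lemma gcl_vanish_src {G : Set C} (T₀ : C) (h : ∀ Y ∈ G, ∀ f : T₀ ⟶ Y, f = 0)
    {Y : C} (hY : gcl G Y) : ∀ f : T₀ ⟶ Y, f = 0 := by
  induction hY with
  | of h' => exact h _ h'
  | iso e _ ih =>
      intro f
      have : f ≫ e.inv = 0 := ih _
      rw [← Category.comp_id f, ← e.inv_hom_id, ← Category.assoc, this, Limits.zero_comp]
  | ext T hT _ _ ih₁ ih₃ =>
      intro f
      have h3 : f ≫ T.mor₂ = 0 := ih₃ _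
      obtain ⟨g, hg⟩ := Triangle.coyoneda_exact₂ T hT f h3
      rw [hg, ih₁ g, Limits.zero_comp]

section WithS

variable (S : Set C)

def genSet (p : ℤ → Prop) : Set C := {X | ∃ s ∈ S, ∃ k : ℤ, p k ∧ Nonempty (X ≅ s⟦k⟧)}

def DL (b : ℤ) : Set C := setOf (gcl (genSet S (fun k => k ≤ b)))

def UL (a : ℤ) : Set C := setOf (gcl (genSet S (fun k => a ≤ k)))

variable {S}

lemma DL_mono {b b' : ℤ} (h : b ≤ b') : DL S b ⊆ DL S b' := fun _ hX =>
  gcl_mono (by rintro Y ⟨s, hs, k, hk, e⟩; exact ⟨s, hs, k, hk.trans h, e⟩) hX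

lemma UL_mono {a a' : ℤ} (h : a' ≤ a) : UL S a ⊆ UL S a' := fun _ hX =>
  gcl_mono (by rintro Y ⟨s, hs, k, hk, e⟩; exact ⟨s, hs, k, h.trans hk, e⟩) hX

lemma DL_shift {b : ℤ} {X : C} (hX : X ∈ DL S b) (m : ℤ) : X⟦m⟧ ∈ DL S (b + m) := by
  refine gcl_shift m ?_ hX
  rintro Y ⟨s, hs, k, hk, ⟨e⟩⟩
  exact ⟨s, hs, k + m, by omega,
    ⟨(shiftFunctor C m).mapIso e ≪≫ ((shiftFunctorAdd' C k m (k + m) rfl).app s).symm⟩⟩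

lemma UL_shift {a : ℤ} {X : C} (hX : X ∈ UL S a) (m : ℤ) : X⟦m⟧ ∈ UL S (a + m) := by
  refine gcl_shift m ?_ hX
  rintro Y ⟨s, hs, k, hk, ⟨e⟩⟩
  exact ⟨s, hs, k + m, by omega,
    ⟨(shiftFunctor C m).mapIso e ≪≫ ((shiftFunctorAdd' C k m (k + m) rfl).app s).symm⟩⟩

lemma mem_DL_self {s : C} (hs : s ∈ S) {b : ℤ} (hb : 0 ≤ b) : s ∈ DL S b :=
  gcl.of ⟨s, hs, 0, hb, ⟨((shiftFunctorZero C ℤ).app s).symm⟩⟩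

lemma mem_UL_self {s : C} (hs : s ∈ S) {a : ℤ} (ha : a ≤ 0) : s ∈ UL S a :=
  gcl.of ⟨s, hs, 0, ha, ⟨((shiftFunctorZero C ℤ).app s).symm⟩⟩

lemma zero_mem_DL (hzero : (0 : C) ∈ S) (b : ℤ) : (0 : C) ∈ DL S b := by
  refine gcl.of ⟨0, hzero, b, le_refl _, ⟨?_⟩⟩
  exact ((((shiftFunctor C b)).mapZeroObject).symm : (0 : C) ≅ _)

end WithS


section EH

variable {C : Type*} [Category C] [Preadditive C] [HasZeroObject C]
    [HasShift C ℤ] [∀ n : ℤ, (CategoryTheory.shiftFunctor C n).Additive]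
    [Pretriangulated C]

/-- shift adjunction calculus -/
noncomputable def eh (m : ℤ) {W Y : C} (φ : W ⟶ Y⟦m⟧) : W⟦-m⟧ ⟶ Y :=
  φ⟦-m⟧' ≫ (shiftFunctorCompIsoId C m (-m) (add_neg_cancel m)).hom.app Y

lemma eh_comp (m : ℤ) {W Y Y' : C} (φ : W ⟶ Y⟦m⟧) (h : Y ⟶ Y') :
    eh m (φ ≫ h⟦m⟧') = eh m φ ≫ h := by
  dsimp [eh]
  rw [Functor.map_comp, Category.assoc, Category.assoc]
  congr 1
  exact (shiftFunctorCompIsoId C m (-m) (add_neg_cancel m)).hom.naturality h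

lemma eh_precomp (m : ℤ) {W' W Y : C} (c : W' ⟶ W) (φ : W ⟶ Y⟦m⟧) :
    eh m (c ≫ φ) = c⟦-m⟧' ≫ eh m φ := by
  dsimp [eh]; rw [Functor.map_comp, Category.assoc]

@[simp] lemma eh_zero (m : ℤ) {W Y : C} : eh m (0 : W ⟶ Y⟦m⟧) = 0 := by
  dsimp [eh]; rw [Functor.map_zero, Limits.zero_comp]

lemma eh_eq_zero_iff (m : ℤ) {W Y : C} (φ : W ⟶ Y⟦m⟧) : eh m φ = 0 ↔ φ = 0 := by
  constructor
  · intro h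
    dsimp [eh] at h
    have h2 : (shiftFunctor C (-m)).map φ = 0 := by
      have := congrArg
        (fun t => t ≫ (shiftFunctorCompIsoId C m (-m) (add_neg_cancel m)).inv.app Y) h
      simpa using this
    exact ((shiftFunctor C (-m)).map_eq_zero_iff).1 h2
  · rintro rfl; simp

lemma eh_surjective (m : ℤ) {W Y : C} (χ : W⟦-m⟧ ⟶ Y) : ∃ φ : W ⟶ Y⟦m⟧, eh m φ = χ := by
  obtain ⟨φ, hφ⟩ := (shiftFunctor C (-m)).map_surjective
    (χ ≫ (shiftFunctorCompIsoId C m (-m) (add_neg_cancel m)).inv.app Y)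
  refine ⟨φ, ?_⟩
  dsimp [eh]
  rw [hφ, Category.assoc, Iso.inv_hom_id_app]
  simp

lemma eh_injective (m : ℤ) {W Y : C} {φ φ' : W ⟶ Y⟦m⟧} (h : eh m φ = eh m φ') : φ = φ' := by
  have : eh m (φ - φ') = 0 := by
    dsimp [eh] at h ⊢
    rw [Functor.map_sub, Preadditive.sub_comp, h, sub_self]
  rw [eh_eq_zero_iff] at this
  rwa [sub_eq_zero] at this

/-- inverse rotation's first morphism is `-(eh 1 T.mor₃)`. -/
lemma invRotate_mor₁ (T : Triangle C) :
    T.invRotate.mor₁ = -(eh 1 T.mor₃) := by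
  dsimp [Triangle.invRotate, eh]
  rfl

end EH

section Orth

variable {C : Type*} [Category C] [Preadditive C] [HasZeroObject C]
    [HasShift C ℤ] [∀ n : ℤ, (CategoryTheory.shiftFunctor C n).Additive]
    [Pretriangulated C]

variable {S : Set C}
  (horth : ∀ X ∈ S, ∀ Y ∈ S, ∀ k : ℤ, 0 < k → ∀ f : X ⟶ Y⟦k⟧, f = 0)

include horth

/-- generator-to-generator orthogonality -/
lemma gen_orth {s s' : C} (hs : s ∈ S) (hs' : s' ∈ S) {k j : ℤ} (h : k < j)
    (f : s⟦k⟧ ⟶ s'⟦j⟧) : f = 0 := by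
  have hkj : 0 < j - k := by omega
  set e₂ : (s'⟦j⟧)⟦-k⟧ ≅ s'⟦j - k⟧ :=
    ((shiftFunctorAdd' C j (-k) (j - k) (by ring)).app s').symm with he₂
  have hg : (shiftFunctorCompIsoId C k (-k) (add_neg_cancel k)).inv.app s ≫ f⟦-k⟧' ≫ e₂.hom
      = 0 := horth s hs s' hs' (j - k) hkj _
  have h1 : f⟦-k⟧' = 0 := by
    have := congrArg (fun t =>
      (shiftFunctorCompIsoId C k (-k) (add_neg_cancel k)).hom.app s ≫ t ≫ e₂.inv) hg
    simpa [Category.assoc] using this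
  exact ((shiftFunctor C (-k)).map_eq_zero_iff).1 h1

/-- downward class is left-orthogonal to upward class at higher level -/
lemma DL_orth_UL {b a : ℤ} (hba : b < a) {W Y : C}
    (hW : W ∈ DL S b) (hY : Y ∈ UL S a) (f : W ⟶ Y) : f = 0 := by
  refine gcl_vanish_tgt Y ?_ hW f
  rintro X ⟨s, hs, k, hk, ⟨e⟩⟩
  intro f'
  have : ∀ g : s⟦k⟧ ⟶ Y, g = 0 := by
    intro g
    refine gcl_vanish_src (s⟦k⟧) ?_ hY g
    rintro Z ⟨s', hs', j, hj, ⟨e'⟩⟩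
    intro h'
    have : h' ≫ e'.hom = 0 := gen_orth horth hs hs' (by omega) _
    rw [← Category.comp_id h', ← e'.hom_inv_id, ← Category.assoc, this, Limits.zero_comp]
  have h0 : e.inv ≫ f' = 0 := this _
  rw [← Category.id_comp f', ← e.hom_inv_id, Category.assoc, h0, Limits.comp_zero]

end Orth


section Approx

variable {C : Type*} [Category C] [Preadditive C] [HasZeroObject C]
    [HasShift C ℤ] [∀ n : ℤ, (CategoryTheory.shiftFunctor C n).Additive]
    [Pretriangulated C]

/-- cellular approximation at level `b` -/
structure IsApprox (S : Set C) (b : ℤ) (A Y : C) (g : A ⟶ Y) : Prop where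
  mem : A ∈ DL S b
  surj : ∀ W ∈ DL S b, ∀ φ : W ⟶ Y, ∃ χ : W ⟶ A, χ ≫ g = φ
  inj : ∀ V ∈ DL S (b - 1), ∀ ψ : V ⟶ A, ψ ≫ g = 0 → ψ = 0

lemma IsApprox.shift {S : Set C} {b : ℤ} {A Y : C} {g : A ⟶ Y}
    (h : IsApprox S b A Y g) (m : ℤ) : IsApprox S (b + m) (A⟦m⟧) (Y⟦m⟧) (g⟦m⟧') := by
  refine ⟨DL_shift h.mem m, ?_, ?_⟩
  · intro W hW φ
    have hW' : W⟦-m⟧ ∈ DL S b := by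
      have := DL_shift hW (-m)
      rwa [show b + m + -m = b by ring] at this
    obtain ⟨χt, hχt⟩ := h.surj _ hW' (eh m φ)
    obtain ⟨χ, hχ⟩ := eh_surjective m (W := W) (Y := A) χt
    refine ⟨χ, eh_injective m ?_⟩
    rw [eh_comp, hχ, hχt]
  · intro V hV ψ hψ
    have hV' : V⟦-m⟧ ∈ DL S (b - 1) := by
      have := DL_shift hV (-m)
      rwa [show b + m - 1 + -m = b - 1 by ring] at this
    have h0 : eh m ψ ≫ g = 0 := by rw [← eh_comp, hψ, eh_zero]
    exact (eh_eq_zero_iff m ψ).1 (h.inj _ hV' _ h0)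

lemma IsApprox.ofIso {S : Set C} {b : ℤ} {A Y Y' : C} {g : A ⟶ Y}
    (h : IsApprox S b A Y g) (e : Y ≅ Y') : IsApprox S b A Y' (g ≫ e.hom) := by
  refine ⟨h.mem, ?_, ?_⟩
  · intro W hW φ
    obtain ⟨χ, hχ⟩ := h.surj W hW (φ ≫ e.inv)
    exact ⟨χ, by rw [← Category.assoc, hχ, Category.assoc, e.inv_hom_id, Category.comp_id]⟩
  · intro V hV ψ hψ
    refine h.inj V hV ψ ?_
    have := congrArg (fun t => t ≫ e.inv) hψ
    simpa [Category.assoc] using this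

variable {S : Set C}

lemma isApprox_base
    (horth : ∀ X ∈ S, ∀ Y ∈ S, ∀ k : ℤ, 0 < k → ∀ f : X ⟶ Y⟦k⟧, f = 0)
    (hzero : (0 : C) ∈ S) {s : C} (hs : s ∈ S) (b : ℤ) :
    ∃ (A : C) (g : A ⟶ s), IsApprox S b A s g := by
  rcases le_or_gt 0 b with hb | hb
  · exact ⟨s, 𝟙 s, ⟨mem_DL_self hs hb, fun W _ φ => ⟨φ, Category.comp_id φ⟩,
      fun V _ ψ h => by simpa using h⟩⟩
  · refine ⟨0, 0, ⟨zero_mem_DL hzero b, ?_, ?_⟩⟩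
    · intro W hW φ
      have hφ : φ = 0 := DL_orth_UL horth (show b < 0 by omega) hW (mem_UL_self hs le_rfl) φ
      exact ⟨0, by rw [hφ, Limits.zero_comp]⟩
    · intro V _ ψ _
      exact (isZero_zero C).eq_of_tgt ψ 0

lemma isApprox_ext (T : Triangle C) (hT : T ∈ distinguishedTriangles)
    {b : ℤ} {A₁ A₃ : C} {g₁ : A₁ ⟶ T.obj₁} {g₃ : A₃ ⟶ T.obj₃}
    (H₁ : IsApprox S b A₁ T.obj₁ g₁) (H₃ : IsApprox S b A₃ T.obj₃ g₃) :
    ∃ (A₂ : C) (g₂ : A₂ ⟶ T.obj₂), IsApprox S b A₂ T.obj₂ g₂ := by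
  -- construct the connecting map ξ
  have hA₃m : A₃⟦(-1 : ℤ)⟧ ∈ DL S (b - 1) := by
    have := DL_shift H₃.mem (-1)
    rwa [show b + -1 = b - 1 by ring] at this
  obtain ⟨χt, hχt⟩ := H₁.surj _ (DL_mono (by omega) hA₃m) (eh 1 (g₃ ≫ T.mor₃))
  obtain ⟨ξ, hξ⟩ := eh_surjective 1 (W := A₃) (Y := A₁) χt
  have hkey : ξ ≫ g₁⟦(1 : ℤ)⟧' = g₃ ≫ T.mor₃ :=
    eh_injective 1 (by rw [eh_comp, hξ, hχt])
  obtain ⟨M, ι, π, hR⟩ := distinguished_cocone_triangle₂ ξ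
  let R : Triangle C := Triangle.mk ι π ξ
  have hM : R.obj₂ ∈ DL S b := gcl.ext R hR H₁.mem H₃.mem
  have hkey' : R.mor₃ ≫ g₁⟦(1 : ℤ)⟧' = g₃ ≫ T.mor₃ := hkey
  obtain ⟨g₂, hs1, hs2⟩ := complete_distinguished_triangle_morphism₂ R T hR hT g₁ g₃ hkey'
  -- hs1 : R.mor₁ ≫ g₂ = g₁ ≫ T.mor₁,  hs2 : R.mor₂ ≫ g₃ = g₂ ≫ T.mor₂
  refine ⟨R.obj₂, g₂, ⟨hM, ?_, ?_⟩⟩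
  · -- surjectivity
    intro W hW φ
    obtain ⟨χ₃, hχ₃⟩ := H₃.surj W hW (φ ≫ T.mor₂)
    have hχ₃ξ : χ₃ ≫ R.mor₃ = 0 := by
      have hρg : (χ₃ ≫ ξ) ≫ g₁⟦(1 : ℤ)⟧' = 0 := by
        rw [Category.assoc, hkey, ← Category.assoc, hχ₃, Category.assoc,
          comp_distTriang_mor_zero₂₃ T hT, Limits.comp_zero]
      have hW' : W⟦(-1 : ℤ)⟧ ∈ DL S (b - 1) := by
        have := DL_shift hW (-1)
        rwa [show b + -1 = b - 1 by ring] at this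
      have h0 : eh 1 (χ₃ ≫ ξ) ≫ g₁ = 0 := by rw [← eh_comp, hρg, eh_zero]
      exact (eh_eq_zero_iff 1 _).1 (H₁.inj _ hW' _ h0)
    obtain ⟨χ', hχ'⟩ := Triangle.coyoneda_exact₃ R hR χ₃ hχ₃ξ
    have hδv : (φ - χ' ≫ g₂) ≫ T.mor₂ = 0 := by
      erw [Preadditive.sub_comp, Category.assoc, ← hs2, ← Category.assoc, ← hχ',
        hχ₃, sub_self]
    obtain ⟨ε, hε⟩ := Triangle.coyoneda_exact₂ T hT (φ - χ' ≫ g₂) hδv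
    obtain ⟨χ₁, hχ₁⟩ := H₁.surj W hW ε
    refine ⟨χ' + χ₁ ≫ R.mor₁, ?_⟩
    erw [Preadditive.add_comp, Category.assoc, hs1, ← Category.assoc χ₁, hχ₁, ← hε]
    abel
  · -- injectivity
    intro V hV ψ hψ0
    have hψπ : ψ ≫ R.mor₂ = 0 := by
      refine H₃.inj V hV _ ?_
      erw [Category.assoc, hs2, ← Category.assoc, hψ0, Limits.zero_comp]
    obtain ⟨ψ₁, hψ₁⟩ := Triangle.coyoneda_exact₂ R hR ψ hψπ
    -- ψ₁ ≫ g₁ kills T.mor₁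
    have hu : (ψ₁ ≫ g₁) ≫ T.mor₁ = 0 := by
      erw [Category.assoc, ← hs1, ← Category.assoc, ← hψ₁]
      exact hψ0
    obtain ⟨τ₀, hτ₀⟩ := Triangle.coyoneda_exact₂ T.invRotate (inv_rot_of_distTriang T hT)
      (ψ₁ ≫ g₁) hu
    have hτ : ψ₁ ≫ g₁ = (-τ₀) ≫ eh 1 T.mor₃ := by
      erw [hτ₀, invRotate_mor₁]
      exact (Preadditive.comp_neg _ _).trans (Preadditive.neg_comp _ _).symm
    have H₃m := H₃.shift (-1)
    rw [show b + -1 = b - 1 by ring] at H₃m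
    obtain ⟨κ, hκ⟩ := H₃m.surj V hV (-τ₀)
    have key2 : eh 1 ξ ≫ g₁ = g₃⟦(-1 : ℤ)⟧' ≫ eh 1 T.mor₃ := by
      rw [← eh_comp, hkey, eh_precomp]
    have hψ₁eq : ψ₁ = (κ ≫ eh 1 ξ : V ⟶ R.obj₁) := by
      have h5 : (ψ₁ - (κ ≫ eh 1 ξ : V ⟶ R.obj₁)) ≫ g₁ = 0 := by
        erw [Preadditive.sub_comp, Category.assoc, key2, ← Category.assoc, hκ, hτ, sub_self]
      have := H₁.inj V hV _ h5
      exact sub_eq_zero.mp this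
    rw [hψ₁, hψ₁eq, Category.assoc]
    have hz : (eh 1 ξ ≫ R.mor₁ : A₃⟦(-1 : ℤ)⟧ ⟶ R.obj₂) = 0 := by
      have h31 : ξ ≫ ι⟦(1 : ℤ)⟧' = 0 := comp_distTriang_mor_zero₃₁ R hR
      have h4 := eh_comp 1 ξ ι
      rw [h31, eh_zero] at h4
      exact h4.symm
    erw [hz, Limits.comp_zero]

end Approx


section Main

variable {C : Type*} [Category C] [Preadditive C] [HasZeroObject C]
    [HasShift C ℤ] [∀ n : ℤ, (CategoryTheory.shiftFunctor C n).Additive]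
    [Pretriangulated C]

variable {S : Set C}

lemma approx_exists
    (horth : ∀ X ∈ S, ∀ Y ∈ S, ∀ k : ℤ, 0 < k → ∀ f : X ⟶ Y⟦k⟧, f = 0)
    (hzero : (0 : C) ∈ S)
    (hgen : ∀ P : Set C, S ⊆ P →
      (∀ {X Y : C}, X ∈ P → Nonempty (X ≅ Y) → Y ∈ P) →
      (∀ X ∈ P, X⟦(1 : ℤ)⟧ ∈ P ∧ X⟦(-1 : ℤ)⟧ ∈ P) →
      (∀ T ∈ (distinguishedTriangles : Set (Triangle C)),
        T.obj₁ ∈ P → T.obj₃ ∈ P → T.obj₂ ∈ P) →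
      ∀ X : C, X ∈ P) (Y : C) (b : ℤ) :
    ∃ (A : C) (g : A ⟶ Y), IsApprox S b A Y g := by
  refine hgen {Z | ∀ b : ℤ, ∃ A g, IsApprox S b A Z g} ?_ ?_ ?_ ?_ Y b
  · intro s hs b'
    exact isApprox_base horth hzero hs b'
  · rintro X X' hX ⟨e⟩ b'
    obtain ⟨A, g, h⟩ := hX b'
    exact ⟨A, g ≫ e.hom, h.ofIso e⟩
  · intro X hX
    constructor
    · intro b'
      obtain ⟨A, g, h⟩ := hX (b' - 1)
      have h2 := h.shift 1
      rw [show b' - 1 + 1 = b' by ring] at h2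
      exact ⟨_, _, h2⟩
    · intro b'
      obtain ⟨A, g, h⟩ := hX (b' + 1)
      have h2 := h.shift (-1)
      rw [show b' + 1 + -1 = b' by ring] at h2
      exact ⟨_, _, h2⟩
  · intro T hT h₁ h₃ b'
    obtain ⟨A₁, g₁, H₁⟩ := h₁ b'
    obtain ⟨A₃, g₃, H₃⟩ := h₃ b'
    exact isApprox_ext T hT H₁ H₃

variable (S) in
/-- the `T_{≥0}` class -/
def geS : Set C := {X | ∃ U ∈ DL S 0, Ret X U}

variable (S) in
/-- the `T_{≤0}` class -/
def leS : Set C := {Y | ∀ W ∈ DL S (-1 : ℤ), ∀ f : W ⟶ Y, f = 0}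

lemma UL_sub_leS (horth : ∀ X ∈ S, ∀ Y ∈ S, ∀ k : ℤ, 0 < k → ∀ f : X ⟶ Y⟦k⟧, f = 0)
    {Y : C} (hY : Y ∈ UL S 0) : Y ∈ leS S :=
  fun _ hW f => DL_orth_UL horth (by omega) hW hY f

lemma S_sub_leS (horth : ∀ X ∈ S, ∀ Y ∈ S, ∀ k : ℤ, 0 < k → ∀ f : X ⟶ Y⟦k⟧, f = 0)
    {s : C} (hs : s ∈ S) : s ∈ leS S :=
  UL_sub_leS horth (mem_UL_self hs le_rfl)

lemma S_sub_geS {s : C} (hs : s ∈ S) : s ∈ geS S :=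
  ⟨s, mem_DL_self hs le_rfl, Ret.refl s⟩

lemma ret_shift_down {X U : C} (h : Ret (X⟦(1 : ℤ)⟧) U) : Ret X (U⟦(-1 : ℤ)⟧) :=
  Ret.trans (Ret.of_iso
    (((shiftFunctorCompIsoId C 1 (-1) (add_neg_cancel 1)).app X).symm)) (h.shift (-1))

lemma ret_shift_up {X U : C} (h : Ret (X⟦(-1 : ℤ)⟧) U) : Ret X (U⟦(1 : ℤ)⟧) :=
  Ret.trans (Ret.of_iso
    (((shiftFunctorCompIsoId C (-1) 1 (neg_add_cancel 1)).app X).symm)) (h.shift 1)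

lemma leS_vanish {X Y : C} (hX : X ∈ DL S (-1 : ℤ)) (hY : Y ∈ leS S) (f : X ⟶ Y) : f = 0 :=
  hY X hX f

lemma ret_vanish {X U Y : C} (hR : Ret X U) (hU : U ∈ DL S (-1 : ℤ)) (hY : Y ∈ leS S)
    (f : X ⟶ Y) : f = 0 := by
  obtain ⟨i, r, hir⟩ := hR
  have : r ≫ f = 0 := hY U hU _
  rw [← Category.id_comp f, ← hir, Category.assoc, this, Limits.comp_zero]

/-- unique weight quotient map (CLAIM-B) -/
lemma claimB [HasBinaryBiproducts C]
    (horth : ∀ X ∈ S, ∀ Y ∈ S, ∀ k : ℤ, 0 < k → ∀ f : X ⟶ Y⟦k⟧, f = 0)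
    (hzero : (0 : C) ∈ S)
    (hiso : ∀ {X Y : C}, X ∈ S → Nonempty (X ≅ Y) → Y ∈ S)
    (hsum : ∀ X ∈ S, ∀ Y ∈ S, (X ⊞ Y) ∈ S)
    {U : C} (hU : U ∈ DL S 0) :
    ∃ s ∈ S, ∃ q : U ⟶ s, ∀ X ∈ leS S, ∀ ρ : U ⟶ X, ∃ m : s ⟶ X, q ≫ m = ρ := by
  induction hU with
  | @of U h =>
      obtain ⟨s₀, hs₀, k, hk, ⟨e⟩⟩ := h
      rcases lt_or_eq_of_le hk with hkneg | hk0
      · -- purely negative generator: maps to `leS` objects vanish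
        refine ⟨0, hzero, 0, ?_⟩
        intro X hX ρ
        have hρ : ρ = 0 := leS_vanish (gcl.of ⟨s₀, hs₀, k, by omega, ⟨e⟩⟩) hX ρ
        exact ⟨0, by rw [hρ, Limits.zero_comp]⟩
      · -- level-zero generator: `U` belongs to `S`
        have hUS : U ∈ S := by
          refine hiso hs₀ ⟨?_⟩
          subst hk0
          exact ((shiftFunctorZero C ℤ).app s₀).symm ≪≫ e.symm
        exact ⟨U, hUS, 𝟙 U, fun X _ ρ => ⟨ρ, Category.id_comp ρ⟩⟩
  | @iso U U' e _ ih =>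
      obtain ⟨s, hs, q, hq⟩ := ih
      refine ⟨s, hs, e.inv ≫ q, ?_⟩
      intro X hX ρ
      obtain ⟨m, hm⟩ := hq X hX (e.hom ≫ ρ)
      exact ⟨m, by rw [Category.assoc, hm, ← Category.assoc, e.inv_hom_id, Category.id_comp]⟩
  | @ext T hT hg₁ hg₃ ih₁ ih₃ =>
      obtain ⟨s₁, hs₁, q₁, hq₁⟩ := ih₁
      obtain ⟨s₃, hs₃, q₃, hq₃⟩ := ih₃
      -- extend q₁ over T.mor₁
      have hvanish : T.invRotate.mor₁ ≫ q₁ = 0 := by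
        refine leS_vanish ?_ (S_sub_leS horth hs₁) _
        have := DL_shift hg₃ (-1)
        rwa [show (0 : ℤ) + -1 = -1 by ring] at this
      obtain ⟨qh₀, hqh₀⟩ := Triangle.yoneda_exact₂ T.invRotate (inv_rot_of_distTriang T hT)
        q₁ hvanish
      let qh₁ : T.obj₂ ⟶ s₁ := qh₀
      -- hqh₀ : q₁ = T.invRotate.mor₂ ≫ qh₀,  T.invRotate.mor₂ = T.mor₁
      have hqh₁' : q₁ = T.mor₁ ≫ qh₁ := hqh₀
      refine ⟨s₁ ⊞ s₃, hsum _ hs₁ _ hs₃, biprod.lift qh₁ (T.mor₂ ≫ q₃), ?_⟩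
      intro X hX ρ
      obtain ⟨m₁, hm₁⟩ := hq₁ X hX (T.mor₁ ≫ ρ)
      have hres : T.mor₁ ≫ (ρ - qh₁ ≫ m₁) = 0 := by
        rw [Preadditive.comp_sub, ← Category.assoc, ← hqh₁', hm₁, sub_self]
      obtain ⟨τ, hτ⟩ := Triangle.yoneda_exact₂ T hT _ hres
      obtain ⟨m₃, hm₃⟩ := hq₃ X hX τ
      refine ⟨biprod.desc m₁ m₃, ?_⟩
      rw [biprod.lift_desc, Category.assoc, hm₃, ← hτ]
      abel

end Main


section BuildT

variable {C : Type*} [Category C] [Preadditive C] [HasZeroObject C]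
    [HasShift C ℤ] [∀ n : ℤ, (CategoryTheory.shiftFunctor C n).Additive]
    [Pretriangulated C]

variable {S : Set C}

variable (S) in
/-- The co-t-structure generated by `S`. -/
noncomputable def myT
    (horth : ∀ X ∈ S, ∀ Y ∈ S, ∀ k : ℤ, 0 < k → ∀ f : X ⟶ Y⟦k⟧, f = 0)
    (hzero : (0 : C) ∈ S)
    (hgen : ∀ P : Set C, S ⊆ P →
      (∀ {X Y : C}, X ∈ P → Nonempty (X ≅ Y) → Y ∈ P) →
      (∀ X ∈ P, X⟦(1 : ℤ)⟧ ∈ P ∧ X⟦(-1 : ℤ)⟧ ∈ P) →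
      (∀ T ∈ (distinguishedTriangles : Set (Triangle C)),
        T.obj₁ ∈ P → T.obj₃ ∈ P → T.obj₂ ∈ P) →
      ∀ X : C, X ∈ P) : CoTStructure C where
  ge := geS S
  le := leS S
  ge_summand := by
    rintro X Y ⟨U, hU, hR⟩ ⟨i, r, hir⟩
    exact ⟨U, hU, Ret.trans ⟨i, r, hir⟩ hR⟩
  le_summand := by
    rintro X Y hX ⟨i, r, hir⟩ W hW f
    have h1 : f ≫ i = 0 := hX W hW _
    rw [← Category.comp_id f, ← hir, ← Category.assoc, h1, Limits.zero_comp]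
  ge_shift := by
    rintro X ⟨U, hU, hR⟩
    refine ⟨U⟦(-1 : ℤ)⟧, ?_, hR.shift (-1)⟩
    have := DL_shift hU (-1)
    rw [show (0 : ℤ) + -1 = -1 by ring] at this
    exact DL_mono (by omega) this
  le_shift := by
    intro X hX W hW f
    have hW' : W⟦(-1 : ℤ)⟧ ∈ DL S (-2) := by
      have := DL_shift hW (-1)
      rwa [show (-1 : ℤ) + -1 = -2 by ring] at this
    have h0 : eh 1 f = 0 := hX _ (DL_mono (by omega) hW') _
    exact (eh_eq_zero_iff 1 f).1 h0
  hom_zero := by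
    rintro X ⟨U, hU, hR⟩ Y hY f
    have hU' : U⟦(-1 : ℤ)⟧ ∈ DL S (-1) := by
      have := DL_shift hU (-1)
      rwa [show (0 : ℤ) + -1 = -1 by ring] at this
    exact ret_vanish (ret_shift_down hR) hU' hY f
  exists_triangle := by
    intro X
    obtain ⟨A, g, hA⟩ := approx_exists horth hzero hgen X (-1)
    obtain ⟨Q, e, d, hTr⟩ := distinguished_cocone_triangle g
    refine ⟨A, Q, g, e, d, ?_, ?_, hTr⟩
    · have := DL_shift hA.mem 1
      rw [show (-1 : ℤ) + 1 = 0 by ring] at this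
      exact ⟨A⟦(1 : ℤ)⟧, this, Ret.refl _⟩
    · intro W hW f
      have hfd : f ≫ d = 0 := by
        have h1 : (f ≫ d) ≫ g⟦(1 : ℤ)⟧' = 0 := by
          have h31 : d ≫ g⟦(1 : ℤ)⟧' = 0 := comp_distTriang_mor_zero₃₁ _ hTr
          rw [Category.assoc, h31, Limits.comp_zero]
        have hW' : W⟦(-1 : ℤ)⟧ ∈ DL S (-1 - 1) := by
          have := DL_shift hW (-1)
          rwa [show (-1 : ℤ) + -1 = -1 - 1 by ring] at this
        have h0 : eh 1 (f ≫ d) ≫ g = 0 := by rw [← eh_comp, h1, eh_zero]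
        exact (eh_eq_zero_iff 1 _).1 (hA.inj _ hW' _ h0)
      obtain ⟨ψ, hψ⟩ := Triangle.coyoneda_exact₃ _ hTr f hfd
      obtain ⟨χ, hχ⟩ := hA.surj W hW ψ
      erw [hψ, ← hχ, Category.assoc]
      show χ ≫ g ≫ e = 0
      have h12 : g ≫ e = 0 := comp_distTriang_mor_zero₁₂ _ hTr
      rw [h12, Limits.comp_zero]

lemma bddAll
    (hgen : ∀ P : Set C, S ⊆ P →
      (∀ {X Y : C}, X ∈ P → Nonempty (X ≅ Y) → Y ∈ P) →
      (∀ X ∈ P, X⟦(1 : ℤ)⟧ ∈ P ∧ X⟦(-1 : ℤ)⟧ ∈ P) →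
      (∀ T ∈ (distinguishedTriangles : Set (Triangle C)),
        T.obj₁ ∈ P → T.obj₃ ∈ P → T.obj₂ ∈ P) →
      ∀ X : C, X ∈ P)
    (X : C) : (∃ b : ℤ, X ∈ DL S b) ∧ (∃ a : ℤ, X ∈ UL S a) := by
  refine hgen {Z | (∃ b : ℤ, Z ∈ DL S b) ∧ (∃ a : ℤ, Z ∈ UL S a)} ?_ ?_ ?_ ?_ X
  · intro s hs
    exact ⟨⟨0, mem_DL_self hs le_rfl⟩, ⟨0, mem_UL_self hs le_rfl⟩⟩
  · rintro Z Z' ⟨⟨b, hb⟩, ⟨a, ha⟩⟩ ⟨e⟩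
    exact ⟨⟨b, gcl.iso e hb⟩, ⟨a, gcl.iso e ha⟩⟩
  · rintro Z ⟨⟨b, hb⟩, ⟨a, ha⟩⟩
    exact ⟨⟨⟨b + 1, DL_shift hb 1⟩, ⟨a + 1, UL_shift ha 1⟩⟩,
      ⟨⟨b + -1, DL_shift hb (-1)⟩, ⟨a + -1, UL_shift ha (-1)⟩⟩⟩
  · rintro T hT ⟨⟨b₁, hb₁⟩, ⟨a₁, ha₁⟩⟩ ⟨⟨b₃, hb₃⟩, ⟨a₃, ha₃⟩⟩
    refine ⟨⟨max b₁ b₃, gcl.ext T hT (DL_mono (le_max_left _ _) hb₁)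
      (DL_mono (le_max_right _ _) hb₃)⟩,
      ⟨min a₁ a₃, gcl.ext T hT (UL_mono (min_le_left _ _) ha₁)
      (UL_mono (min_le_right _ _) ha₃)⟩⟩

end BuildT


section CoTLemmas

variable {C : Type*} [Category C] [Preadditive C] [HasZeroObject C]
    [HasShift C ℤ] [∀ n : ℤ, (CategoryTheory.shiftFunctor C n).Additive]
    [Pretriangulated C]

variable (t : CoTStructure C)

lemma ge_iso {X Y : C} (hX : X ∈ t.ge) (e : X ≅ Y) : Y ∈ t.ge :=
  t.ge_summand hX ⟨e.inv, e.hom, e.inv_hom_id⟩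

lemma le_iso {X Y : C} (hX : X ∈ t.le) (e : X ≅ Y) : Y ∈ t.le :=
  t.le_summand hX ⟨e.inv, e.hom, e.inv_hom_id⟩

lemma ge_char {X : C} : X ∈ t.ge ↔ ∀ Y ∈ t.le, ∀ f : X ⟶ Y⟦(1 : ℤ)⟧, f = 0 := by
  constructor
  · intro hX Y hY f
    have hXm : (X⟦(-1 : ℤ)⟧)⟦(1 : ℤ)⟧ ∈ t.ge :=
      ge_iso t hX (((shiftFunctorCompIsoId C (-1) 1 (neg_add_cancel 1)).app X).symm)
    have hz := t.hom_zero (X⟦(-1 : ℤ)⟧) hXm Y hY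
    exact (eh_eq_zero_iff 1 f).1 (hz _)
  · intro h
    obtain ⟨A, B, f, g, hcon, hA, hB, hTr⟩ := t.exists_triangle (X⟦(-1 : ℤ)⟧)
    have hg : g = 0 := by
      obtain ⟨gg, hgg⟩ := eh_surjective 1 (W := X) (Y := B) g
      rw [← hgg, h B hB gg, eh_zero]
    obtain ⟨σ, hσ⟩ := Triangle.coyoneda_exact₂ _ hTr (𝟙 (X⟦(-1 : ℤ)⟧))
      (by erw [Category.id_comp]; exact hg)
    have hσ' : σ ≫ f = 𝟙 (X⟦(-1 : ℤ)⟧) := hσ.symm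
    refine t.ge_summand hA
      ⟨((shiftFunctorCompIsoId C (-1) 1 (neg_add_cancel 1)).app X).inv ≫ σ⟦(1 : ℤ)⟧',
       f⟦(1 : ℤ)⟧' ≫ ((shiftFunctorCompIsoId C (-1) 1 (neg_add_cancel 1)).app X).hom, ?_⟩
    erw [Category.assoc, ← Category.assoc (σ⟦(1 : ℤ)⟧'), ← Functor.map_comp, hσ',
      CategoryTheory.Functor.map_id, Category.id_comp, Iso.inv_hom_id]

lemma le_char {Y : C} : Y ∈ t.le ↔ ∀ X : C, X⟦(1 : ℤ)⟧ ∈ t.ge → ∀ f : X ⟶ Y, f = 0 := by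
  constructor
  · intro hY X hX f
    exact t.hom_zero X hX Y hY f
  · intro h
    obtain ⟨A, B, f, g, hcon, hA, hB, hTr⟩ := t.exists_triangle Y
    have hf : f = 0 := h A hA f
    obtain ⟨σ, hσ⟩ := Triangle.yoneda_exact₂ _ hTr (𝟙 Y)
      (by show f ≫ 𝟙 Y = 0; rw [Category.comp_id]; exact hf)
    have hσ' : g ≫ σ = 𝟙 Y := hσ.symm
    exact t.le_summand hB ⟨g, σ, hσ'⟩

lemma ge_ext (T : Triangle C) (hT : T ∈ distinguishedTriangles)
    (h₁ : T.obj₁ ∈ t.ge) (h₃ : T.obj₃ ∈ t.ge) : T.obj₂ ∈ t.ge := by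
  refine (ge_char t).2 ?_
  intro Y hY f
  have e1 : T.mor₁ ≫ f = 0 := (ge_char t).1 h₁ Y hY _
  obtain ⟨g', hg'⟩ := Triangle.yoneda_exact₂ T hT f e1
  rw [hg', (ge_char t).1 h₃ Y hY g', Limits.comp_zero]

lemma le_ext (T : Triangle C) (hT : T ∈ distinguishedTriangles)
    (h₁ : T.obj₁ ∈ t.le) (h₃ : T.obj₃ ∈ t.le) : T.obj₂ ∈ t.le := by
  refine (le_char t).2 ?_
  intro X hX f
  have e3 : f ≫ T.mor₂ = 0 := (le_char t).1 h₃ X hX _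
  obtain ⟨χ, hχ⟩ := Triangle.coyoneda_exact₂ T hT f e3
  rw [hχ, (le_char t).1 h₁ X hX χ, Limits.zero_comp]

lemma le_shift_nat {X : C} (hX : X ∈ t.le) (k : ℕ) : X⟦(k : ℤ)⟧ ∈ t.le := by
  induction k with
  | zero => exact le_iso t hX ((shiftFunctorZero C ℤ).app X).symm
  | succ k ih =>
      have h1 := t.le_shift _ ih
      have h2 : X⟦((k : ℤ) + 1)⟧ ∈ t.le :=
        le_iso t h1 ((shiftFunctorAdd' C (k : ℤ) 1 ((k : ℤ) + 1) rfl).app X).symm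
      rw [show (((k + 1 : ℕ)) : ℤ) = (k : ℤ) + 1 by push_cast; ring]
      exact h2

lemma ge_shift_nat {X : C} (hX : X ∈ t.ge) (k : ℕ) : X⟦-(k : ℤ)⟧ ∈ t.ge := by
  induction k with
  | zero =>
      rw [show -((0 : ℕ) : ℤ) = (0 : ℤ) by simp]
      exact ge_iso t hX ((shiftFunctorZero C ℤ).app X).symm
  | succ k ih =>
      have h1 := t.ge_shift _ ih
      have h2 : X⟦(-(k : ℤ) + -1)⟧ ∈ t.ge :=
        ge_iso t h1 ((shiftFunctorAdd' C (-(k : ℤ)) (-1) (-(k : ℤ) + -1) rfl).app X).symm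
      rw [show -(((k + 1 : ℕ)) : ℤ) = -(k : ℤ) + -1 by push_cast; ring]
      exact h2

lemma le_upward {X : C} {m n : ℤ} (h : m ≤ n) (hX : X⟦m⟧ ∈ t.le) : X⟦n⟧ ∈ t.le := by
  obtain ⟨k, hk⟩ : ∃ k : ℕ, n = m + (k : ℤ) := ⟨(n - m).toNat, by omega⟩
  have h1 := le_shift_nat t hX k
  have h2 : X⟦(m + (k : ℤ))⟧ ∈ t.le :=
    le_iso t h1 ((shiftFunctorAdd' C m (k : ℤ) (m + (k : ℤ)) rfl).app X).symm
  rw [hk]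
  exact h2

lemma ge_downward {X : C} {m n : ℤ} (h : n ≤ m) (hX : X⟦m⟧ ∈ t.ge) : X⟦n⟧ ∈ t.ge := by
  obtain ⟨k, hk⟩ : ∃ k : ℕ, n = m + -(k : ℤ) := ⟨(m - n).toNat, by omega⟩
  have h1 := ge_shift_nat t hX k
  have h2 : X⟦(m + -(k : ℤ))⟧ ∈ t.ge :=
    ge_iso t h1 ((shiftFunctorAdd' C m (-(k : ℤ)) (m + -(k : ℤ)) rfl).app X).symm
  rw [hk]
  exact h2

lemma DL_sub_ge {S : Set C} (hS : S ⊆ t.ge) {X : C} (hX : X ∈ DL S 0) : X ∈ t.ge := by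
  induction hX with
  | of h =>
      obtain ⟨s, hs, k, hk, ⟨e⟩⟩ := h
      have h0 : s⟦(0 : ℤ)⟧ ∈ t.ge := ge_iso t (hS hs) ((shiftFunctorZero C ℤ).app s).symm
      exact ge_iso t (ge_downward t hk h0) e.symm
  | iso e _ ih => exact ge_iso t ih e
  | ext T hT _ _ ih₁ ih₃ => exact ge_ext t T hT ih₁ ih₃

lemma UL_sub_le {S : Set C} (hS : S ⊆ t.le) {X : C} (hX : X ∈ UL S 0) : X ∈ t.le := by
  induction hX with
  | of h =>
      obtain ⟨s, hs, k, hk, ⟨e⟩⟩ := h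
      have h0 : s⟦(0 : ℤ)⟧ ∈ t.le := le_iso t (hS hs) ((shiftFunctorZero C ℤ).app s).symm
      exact le_iso t (le_upward t hk h0) e.symm
  | iso e _ ih => exact le_iso t ih e
  | ext T hT _ _ ih₁ ih₃ => exact le_ext t T hT ih₁ ih₃

lemma lemmaU {S : Set C} (hco : t.coheart = S) :
    ∀ k : ℕ, ∀ X : C, X ∈ t.ge → X⟦(k : ℤ)⟧ ∈ t.le → ∃ U ∈ DL S 0, Ret X U := by
  intro k
  induction k with
  | zero =>
      intro X hge hle
      have hXle : X ∈ t.le := le_iso t hle ((shiftFunctorZero C ℤ).app X)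
      have hXS : X ∈ S := by rw [← hco]; exact ⟨hge, hXle⟩
      exact ⟨X, mem_DL_self hXS le_rfl, Ret.refl X⟩
  | succ k ih =>
      intro X hge hle
      obtain ⟨A₀, B₀, f, g, h, hA₁, hB, hTr⟩ := t.exists_triangle X
      have hB₀ge : B₀ ∈ t.ge := ge_ext t _ (rot_of_distTriang _ hTr) hge hA₁
      have hB₀S : B₀ ∈ S := by rw [← hco]; exact ⟨hB₀ge, hB⟩
      have hXk : X⟦(1 : ℤ)⟧⟦(k : ℤ)⟧ ∈ t.le := by
        rw [show (((k + 1 : ℕ)) : ℤ) = 1 + (k : ℤ) by push_cast; ring] at hle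
        exact le_iso t hle ((shiftFunctorAdd' C 1 (k : ℤ) (1 + (k : ℤ)) rfl).app X)
      have hA₁k : (A₀⟦(1 : ℤ)⟧)⟦(k : ℤ)⟧ ∈ t.le := by
        have hrot2 := rot_of_distTriang _ (rot_of_distTriang _ hTr)
        have hsh := Triangle.shift_distinguished _ hrot2 (k : ℤ)
        exact le_ext t _ hsh (le_shift_nat t hB k) hXk
      obtain ⟨U'', hU'', hR''⟩ := ih (A₀⟦(1 : ℤ)⟧) hA₁ hA₁k
      have hV : U''⟦(-1 : ℤ)⟧ ∈ DL S (-1) := by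
        have := DL_shift hU'' (-1)
        rwa [show (0 : ℤ) + -1 = -1 by ring] at this
      obtain ⟨i₀, r₀, hir₀⟩ := ret_shift_down hR''
      obtain ⟨N, ι, π, hRN⟩ := distinguished_cocone_triangle₂ (h ≫ i₀⟦(1 : ℤ)⟧')
      have hN : (Triangle.mk ι π (h ≫ i₀⟦(1 : ℤ)⟧')).obj₂ ∈ DL S 0 :=
        gcl.ext _ hRN (DL_mono (by omega) hV) (mem_DL_self hB₀S le_rfl)
      obtain ⟨m, hm1, hm2⟩ := complete_distinguished_triangle_morphism₂ (Triangle.mk f g h)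
        (Triangle.mk ι π (h ≫ i₀⟦(1 : ℤ)⟧')) hTr hRN i₀ (𝟙 B₀) (by
          show h ≫ i₀⟦(1 : ℤ)⟧' = 𝟙 B₀ ≫ (h ≫ i₀⟦(1 : ℤ)⟧')
          rw [Category.id_comp])
      obtain ⟨m', hm'1, hm'2⟩ := complete_distinguished_triangle_morphism₂
        (Triangle.mk ι π (h ≫ i₀⟦(1 : ℤ)⟧')) (Triangle.mk f g h) hRN hTr r₀ (𝟙 B₀) (by
          show (h ≫ i₀⟦(1 : ℤ)⟧') ≫ r₀⟦(1 : ℤ)⟧' = 𝟙 B₀ ≫ h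
          rw [Category.assoc, ← Functor.map_comp, hir₀, CategoryTheory.Functor.map_id,
            Category.comp_id, Category.id_comp])
      let mf : X ⟶ N := m
      let mb : N ⟶ X := m'
      have Hm1 : f ≫ mf = i₀ ≫ ι := hm1
      have Hm2 : g ≫ 𝟙 B₀ = mf ≫ π := hm2
      have Hm'1 : ι ≫ mb = r₀ ≫ f := hm'1
      have Hm'2 : π ≫ 𝟙 B₀ = mb ≫ g := hm'2
      have hmπ : mf ≫ π = g := by rw [← Hm2, Category.comp_id]
      have hm'g : mb ≫ g = π := by rw [← Hm'2, Category.comp_id]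
      have hfε : f ≫ (mf ≫ mb) = f := by
        rw [← Category.assoc, Hm1, Category.assoc, Hm'1, ← Category.assoc, hir₀,
          Category.id_comp]
      have hεg : (mf ≫ mb) ≫ g = g := by rw [Category.assoc, hm'g, hmπ]
      have hfδ : f ≫ (mf ≫ mb - 𝟙 X) = 0 := by
        rw [Preadditive.comp_sub, hfε, Category.comp_id, sub_self]
      obtain ⟨ρ, hρ⟩ := Triangle.yoneda_exact₂ _ hTr (mf ≫ mb - 𝟙 X) hfδ
      have hρ' : mf ≫ mb - 𝟙 X = g ≫ ρ := hρ
      have hδg : (mf ≫ mb - 𝟙 X) ≫ g = 0 := by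
        rw [Preadditive.sub_comp, hεg, Category.id_comp, sub_self]
      have hδδ : (mf ≫ mb - 𝟙 X) ≫ (mf ≫ mb - 𝟙 X) = 0 := by
        nth_rewrite 2 [hρ']
        erw [← Category.assoc, hδg, Limits.zero_comp]
      have h6 : (mf ≫ mb) ≫ (mf ≫ mb - 𝟙 X) = mf ≫ mb - 𝟙 X := by
        have h7 : mf ≫ mb = 𝟙 X + (mf ≫ mb - 𝟙 X) := by abel
        nth_rewrite 1 [h7]
        rw [Preadditive.add_comp, Category.id_comp, hδδ, add_zero]
      have hinv : (mf ≫ mb) ≫ (𝟙 X - (mf ≫ mb - 𝟙 X)) = 𝟙 X := by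
        rw [Preadditive.comp_sub, Category.comp_id, h6]
        abel
      have hN' : N ∈ DL S 0 := hN
      refine ⟨N, hN', ⟨mf, mb ≫ (𝟙 X - (mf ≫ mb - 𝟙 X)), ?_⟩⟩
      rw [← Category.assoc]
      exact hinv

lemma cot_ext {t₁ t₂ : CoTStructure C} (h₁ : t₁.ge = t₂.ge) (h₂ : t₁.le = t₂.le) :
    t₁ = t₂ := by
  cases t₁
  cases t₂
  dsimp at h₁ h₂
  subst h₁
  subst h₂
  rfl

end CoTLemmas


section Final

variable {C : Type*} [Category C] [Preadditive C] [HasZeroObject C]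
    [HasShift C ℤ] [∀ n : ℤ, (CategoryTheory.shiftFunctor C n).Additive]
    [Pretriangulated C]

variable {S : Set C}

lemma myT_ge
    (horth : ∀ X ∈ S, ∀ Y ∈ S, ∀ k : ℤ, 0 < k → ∀ f : X ⟶ Y⟦k⟧, f = 0)
    (hzero : (0 : C) ∈ S)
    (hgen : ∀ P : Set C, S ⊆ P →
      (∀ {X Y : C}, X ∈ P → Nonempty (X ≅ Y) → Y ∈ P) →
      (∀ X ∈ P, X⟦(1 : ℤ)⟧ ∈ P ∧ X⟦(-1 : ℤ)⟧ ∈ P) →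
      (∀ T ∈ (distinguishedTriangles : Set (Triangle C)),
        T.obj₁ ∈ P → T.obj₃ ∈ P → T.obj₂ ∈ P) →
      ∀ X : C, X ∈ P) : (myT S horth hzero hgen).ge = geS S := rfl

lemma myT_le
    (horth : ∀ X ∈ S, ∀ Y ∈ S, ∀ k : ℤ, 0 < k → ∀ f : X ⟶ Y⟦k⟧, f = 0)
    (hzero : (0 : C) ∈ S)
    (hgen : ∀ P : Set C, S ⊆ P →
      (∀ {X Y : C}, X ∈ P → Nonempty (X ≅ Y) → Y ∈ P) →
      (∀ X ∈ P, X⟦(1 : ℤ)⟧ ∈ P ∧ X⟦(-1 : ℤ)⟧ ∈ P) →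
      (∀ T ∈ (distinguishedTriangles : Set (Triangle C)),
        T.obj₁ ∈ P → T.obj₃ ∈ P → T.obj₂ ∈ P) →
      ∀ X : C, X ∈ P) : (myT S horth hzero hgen).le = leS S := rfl

lemma myT_coheart [HasBinaryBiproducts C]
    (horth : ∀ X ∈ S, ∀ Y ∈ S, ∀ k : ℤ, 0 < k → ∀ f : X ⟶ Y⟦k⟧, f = 0)
    (hzero : (0 : C) ∈ S)
    (hiso : ∀ {X Y : C}, X ∈ S → Nonempty (X ≅ Y) → Y ∈ S)
    (hsum : ∀ X ∈ S, ∀ Y ∈ S, (X ⊞ Y) ∈ S)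
    (hsummand : ∀ {X Y : C}, X ∈ S → (∃ (i : Y ⟶ X) (r : X ⟶ Y), i ≫ r = 𝟙 Y) → Y ∈ S)
    (hgen : ∀ P : Set C, S ⊆ P →
      (∀ {X Y : C}, X ∈ P → Nonempty (X ≅ Y) → Y ∈ P) →
      (∀ X ∈ P, X⟦(1 : ℤ)⟧ ∈ P ∧ X⟦(-1 : ℤ)⟧ ∈ P) →
      (∀ T ∈ (distinguishedTriangles : Set (Triangle C)),
        T.obj₁ ∈ P → T.obj₃ ∈ P → T.obj₂ ∈ P) →
      ∀ X : C, X ∈ P) : (myT S horth hzero hgen).coheart = S := by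
  show geS S ∩ leS S = S
  ext X
  constructor
  · rintro ⟨⟨U, hU, i, r, hir⟩, hXle⟩
    obtain ⟨s, hs, q, hq⟩ := claimB horth hzero hiso hsum hU
    obtain ⟨mm, hmm⟩ := hq X hXle r
    exact hsummand hs ⟨i ≫ q, mm, by rw [Category.assoc, hmm, hir]⟩
  · intro hX
    exact ⟨S_sub_geS hX, S_sub_leS horth hX⟩

lemma unique_aux (t : CoTStructure C) (hbd : t.bounded) (hco : t.coheart = S) :
    t.ge = geS S ∧ t.le = leS S := by
  have hSge : S ⊆ t.ge := by
    intro x hx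
    rw [← hco] at hx
    exact hx.1
  have h1 : t.ge ⊆ geS S := by
    intro X hX
    obtain ⟨n, hn⟩ := (hbd X).2
    have hk : X⟦((n.toNat : ℕ) : ℤ)⟧ ∈ t.le := le_upward t (by omega) hn
    obtain ⟨U, hU, hR⟩ := lemmaU t hco n.toNat X hX hk
    exact ⟨U, hU, hR⟩
  have h2 : geS S ⊆ t.ge := by
    rintro X ⟨U, hU, hR⟩
    exact t.ge_summand (DL_sub_ge t hSge hU) hR
  have h3 : t.le ⊆ leS S := by
    intro Y hY W hW f
    have hW1 : W⟦(1 : ℤ)⟧ ∈ t.ge := by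
      refine DL_sub_ge t hSge ?_
      have := DL_shift hW 1
      rwa [show (-1 : ℤ) + 1 = 0 by ring] at this
    exact t.hom_zero W hW1 Y hY f
  have h4 : leS S ⊆ t.le := by
    intro Y hY
    refine (le_char t).2 ?_
    intro X hX f
    obtain ⟨U, hU, hR⟩ := h1 hX
    have hU' : U⟦(-1 : ℤ)⟧ ∈ DL S (-1) := by
      have := DL_shift hU (-1)
      rwa [show (0 : ℤ) + -1 = -1 by ring] at this
    exact ret_vanish (ret_shift_down hR) hU' hY f
  exact ⟨le_antisymm h1 h2, le_antisymm h3 h4⟩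

end Final

end Stmt6Aux

open Stmt6Aux in
/-- Let `S` be a full additive subcategory (closed under isomorphisms, finite direct
sums, and direct summands) of a triangulated category `C` such that
`Hom(S, S'[k]) = 0` for all `S, S' ∈ S` and `k > 0`, and such that `S` generates `C`
as a triangulated category.  Then `S` is the coheart of a unique bounded
co-t-structure on `C`. -/
theorem stmt_6 [HasBinaryBiproducts C] (S : Set C)
    (hiso : ∀ {X Y : C}, X ∈ S → Nonempty (X ≅ Y) → Y ∈ S)
    (hzero : (0 : C) ∈ S)
    (hsum : ∀ X ∈ S, ∀ Y ∈ S, (X ⊞ Y) ∈ S)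
    (hsummand : ∀ {X Y : C}, X ∈ S → (∃ (i : Y ⟶ X) (r : X ⟶ Y), i ≫ r = 𝟙 Y) → Y ∈ S)
    (horth : ∀ X ∈ S, ∀ Y ∈ S, ∀ k : ℤ, 0 < k → ∀ f : X ⟶ Y⟦k⟧, f = 0)
    (hgen : ∀ P : Set C, S ⊆ P →
      (∀ {X Y : C}, X ∈ P → Nonempty (X ≅ Y) → Y ∈ P) →
      (∀ X ∈ P, X⟦(1 : ℤ)⟧ ∈ P ∧ X⟦(-1 : ℤ)⟧ ∈ P) →
      (∀ T ∈ (distinguishedTriangles : Set (Triangle C)),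
        T.obj₁ ∈ P → T.obj₃ ∈ P → T.obj₂ ∈ P) →
      ∀ X : C, X ∈ P) :
    ∃! t : CoTStructure C, t.bounded ∧ t.coheart = S := by
  refine ⟨myT S horth hzero hgen, ⟨?_, ?_⟩, ?_⟩
  · intro X
    obtain ⟨⟨b, hb⟩, ⟨a, ha⟩⟩ := bddAll hgen X
    constructor
    · refine ⟨-b, ?_⟩
      show X⟦-b⟧ ∈ geS S
      refine ⟨X⟦-b⟧, ?_, Ret.refl _⟩
      have := DL_shift hb (-b)
      rwa [show b + -b = 0 by ring] at this
    · refine ⟨-a, ?_⟩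
      show X⟦-a⟧ ∈ leS S
      have := UL_shift ha (-a)
      rw [show a + -a = 0 by ring] at this
      exact UL_sub_leS horth this
  · exact myT_coheart horth hzero hiso hsum hsummand hgen
  · rintro t ⟨hbd, hco⟩
    obtain ⟨hge, hle⟩ := unique_aux t hbd hco
    exact cot_ext (by rw [hge, myT_ge]) (by rw [hle, myT_le])
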